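/- Let R be a finitely generated unital associative F-algebra and let e, f ∈ R be idempotents such that the two-sided ideal of R generated by e equals R and the two-sided ideal of R generated by f equals R. Then the associative pair (eRf, fRe) is finitely generated: there exist finite subsets S ⊆ eRf and T ⊆ fRe such that for every pair of F-subspaces V ⊆ eRf and W ⊆ fRe with S ⊆ V, T ⊆ W, V·W·V ⊆ V, and W·V·W ⊆ W, one has V = eRf and W = fRe. -/

import Mathlib

open scoped Pointwise

/-- In a submodule, a sum of a list of members is a member. -/
private lemma list_sum_mem_submodule {F R : Type*} [Field F] [Ring R] [Algebra F R]
    (V : Submodule F R) : ∀ L : List R, (∀ x ∈ L, x ∈ V) → L.sum ∈ V := by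
  intro L
  induction L with
  | nil => intro _; simpa using V.zero_mem
  | cons a L ih =>
      intro h
      rw [List.sum_cons]
      exact V.add_mem (h a (by simp)) (ih fun x hx => h x (by simp [hx]))

/-- If the two-sided ideal generated by `e` is everything, then `1` is a finite sum
of elements `a * e * b`. -/
private lemma exists_rep_one {R : Type*} [Ring R] (e : R)
    (hIe : TwoSidedIdeal.span {e} = (⊤ : TwoSidedIdeal R)) :
    ∃ L : List (R × R), (L.map fun p => p.1 * e * p.2).sum = 1 := by
  have h1 : (1 : R) ∈ TwoSidedIdeal.span {e} := by rw [hIe]; trivial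
  rw [TwoSidedIdeal.mem_span_iff_mem_addSubgroup_closure] at h1
  have neg_sum : ∀ L : List (R × R),
      ((L.map fun p : R × R => (-p.1, p.2)).map fun p => p.1 * e * p.2).sum
        = -((L.map fun p => p.1 * e * p.2).sum) := by
    intro L
    induction L with
    | nil => simp
    | cons a L ih =>
        simp only [List.map_cons, List.sum_cons, List.map_map, Function.comp_apply] at *
        rw [ih, neg_mul, neg_mul, neg_add]
  refine AddSubgroup.closure_induction
    (p := fun x _ => ∃ L : List (R × R), (L.map fun p => p.1 * e * p.2).sum = x)
    ?_ ?_ ?_ ?_ h1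
  · rintro x ⟨y, hy, b, -, rfl⟩
    obtain ⟨a, -, e', he', rfl⟩ := hy
    obtain rfl : e' = e := he'
    exact ⟨[(a, b)], by simp⟩
  · exact ⟨[], by simp⟩
  · rintro x y _ _ ⟨L₁, h₁⟩ ⟨L₂, h₂⟩
    exact ⟨L₁ ++ L₂, by simp [h₁, h₂]⟩
  · rintro x _ ⟨L, hx⟩
    exact ⟨L.map fun p => (-p.1, p.2), by rw [neg_sum, hx]⟩

/-- The key induction: any `e * (word over G) * f` belongs to `V`. -/
private lemma word_mem_aux {F R : Type*} [Field F] [Ring R] [Algebra F R]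
    (e f : R) (he : e * e = e) (hf : f * f = f)
    (La Lc : List (R × R))
    (hLa : (La.map fun p => p.1 * e * p.2).sum = 1)
    (hLc : (Lc.map fun p => p.1 * f * p.2).sum = 1)
    (G : Set R) (h1G : (1 : R) ∈ G)
    (haG : ∀ p ∈ La, p.1 ∈ G ∧ p.2 ∈ G)
    (hcG : ∀ p ∈ Lc, p.1 ∈ G ∧ p.2 ∈ G)
    (V W : Submodule F R)
    (hS : ∀ x ∈ G, ∀ y ∈ G, ∀ z ∈ G, e * (x * y * z) * f ∈ V)
    (hT : ∀ x ∈ G, ∀ y ∈ G, ∀ z ∈ G, f * (x * y * z) * e ∈ W)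
    (hVWV : ∀ v ∈ V, ∀ w ∈ W, ∀ v' ∈ V, v * w * v' ∈ V) :
    ∀ L : List R, (∀ x ∈ L, x ∈ G) → e * L.prod * f ∈ V := by
  have he' : ∀ r : R, e * (e * r) = e * r := fun r => by rw [← mul_assoc, he]
  have hf' : ∀ r : R, f * (f * r) = f * r := fun r => by rw [← mul_assoc, hf]
  suffices H : ∀ n (L : List R), L.length ≤ n → (∀ x ∈ L, x ∈ G) → e * L.prod * f ∈ V by
    intro L hL; exact H L.length L le_rfl hL
  intro n
  induction n with
  | zero =>
      intro L hL hGL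
      obtain rfl : L = [] := List.eq_nil_of_length_eq_zero (Nat.le_zero.mp hL)
      simpa using hS 1 h1G 1 h1G 1 h1G
  | succ n ih =>
      intro L hL hGL
      by_cases h3 : L.length ≤ 3
      · rcases L with _ | ⟨x, _ | ⟨y, _ | ⟨z, _ | ⟨w, L'⟩⟩⟩⟩
        · simpa using hS 1 h1G 1 h1G 1 h1G
        · simpa [mul_assoc] using hS x (hGL x (by simp)) 1 h1G 1 h1G
        · simpa [mul_assoc] using
            hS x (hGL x (by simp)) y (hGL y (by simp)) 1 h1G
        · simpa [mul_assoc] using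
            hS x (hGL x (by simp)) y (hGL y (by simp)) z (hGL z (by simp))
        · simp at h3; omega
      · push_neg at h3
        rcases L with _ | ⟨x, _ | ⟨y, L₂⟩⟩
        · simp at h3
        · simp at h3
        · set m₂ := L₂.prod with hm₂
          have hkey : e * (x :: y :: L₂).prod * f
              = (Lc.map fun cd => (La.map fun ab =>
                  (e * (x * y * cd.1) * f) * (f * (cd.2 * ab.1) * e)
                    * (e * (ab.2 * m₂) * f)).sum).sum := by
            have inner : ∀ cd : R × R,
                (La.map fun ab =>
                  (e * (x * y * cd.1) * f) * (f * (cd.2 * ab.1) * e)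
                    * (e * (ab.2 * m₂) * f)).sum
                  = ((e * (x * y)) * (cd.1 * f * cd.2)) * (m₂ * f) := by
              intro cd
              have hmap : (La.map fun ab =>
                    (e * (x * y * cd.1) * f) * (f * (cd.2 * ab.1) * e)
                      * (e * (ab.2 * m₂) * f))
                  = La.map fun ab =>
                      ((e * (x * y)) * (cd.1 * f * cd.2))
                        * ((ab.1 * e * ab.2) * (m₂ * f)) := by
                refine List.map_congr_left fun ab _ => ?_
                simp only [mul_assoc, he', hf']
              rw [hmap, List.sum_map_mul_left, List.sum_map_mul_right, hLa, one_mul]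
            calc e * (x :: y :: L₂).prod * f
                = ((e * (x * y)) * (Lc.map fun p => p.1 * f * p.2).sum) * (m₂ * f) := by
                  rw [hLc, mul_one]; simp [List.prod_cons, mul_assoc, ← hm₂]
              _ = (Lc.map fun cd => ((e * (x * y)) * (cd.1 * f * cd.2)) * (m₂ * f)).sum := by
                  rw [List.sum_map_mul_right, List.sum_map_mul_left]
              _ = (Lc.map fun cd => (La.map fun ab =>
                    (e * (x * y * cd.1) * f) * (f * (cd.2 * ab.1) * e)
                      * (e * (ab.2 * m₂) * f)).sum).sum := by
                  exact (congrArg List.sum (List.map_congr_left fun cd _ => inner cd)).symm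
          rw [hkey]
          refine list_sum_mem_submodule V _ ?_
          intro u hu
          simp only [List.mem_map] at hu
          obtain ⟨cd, hcd, rfl⟩ := hu
          refine list_sum_mem_submodule V _ ?_
          intro u hu
          simp only [List.mem_map] at hu
          obtain ⟨ab, hab, rfl⟩ := hu
          have hv : e * (x * y * cd.1) * f ∈ V :=
            hS x (hGL x (by simp)) y (hGL y (by simp)) cd.1 (hcG cd hcd).1
          have hw : f * (cd.2 * ab.1) * e ∈ W := by
            have := hT cd.2 (hcG cd hcd).2 ab.1 (haG ab hab).1 1 h1G
            simpa using this
          have hv' : e * (ab.2 * m₂) * f ∈ V := by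
            have hlen : (ab.2 :: L₂).length ≤ n := by
              simp only [List.length_cons] at hL ⊢
              simp only [List.length_cons] at h3
              omega
            have := ih (ab.2 :: L₂) hlen
              (by
                intro u hu
                rcases List.mem_cons.mp hu with rfl | hu
                · exact (haG ab hab).2
                · exact hGL u (by simp [hu]))
            simpa [List.prod_cons, hm₂] using this
          exact hVWV _ hv _ hw _ hv'

/-- **Lemma 2.**  Let `R` be a finitely generated unital associative `F`-algebra and
`e, f` idempotents whose two-sided ideals are all of `R`.  Then the associative pair
`(eRf, fRe)` is finitely generated: there are finite subsets `S ⊆ eRf`, `T ⊆ fRe` such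
that the only subpair of `F`-subspaces containing them is `(eRf, fRe)` itself. -/
theorem associative_pair_peirce_fg
    (F : Type*) [Field F] (hchar : (2 : F) ≠ 0)
    (R : Type*) [Ring R] [Algebra F R]
    (hfg : ∃ s : Finset R, Algebra.adjoin F (s : Set R) = ⊤)
    (e f : R) (he : e * e = e) (hf : f * f = f)
    (hIe : TwoSidedIdeal.span {e} = (⊤ : TwoSidedIdeal R))
    (hIf : TwoSidedIdeal.span {f} = (⊤ : TwoSidedIdeal R)) :
    ∃ (S T : Finset R),
      (S : Set R) ⊆ {x | ∃ r : R, x = e * r * f} ∧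
      (T : Set R) ⊆ {x | ∃ r : R, x = f * r * e} ∧
      ∀ V W : Submodule F R,
        (V : Set R) ⊆ {x | ∃ r : R, x = e * r * f} →
        (W : Set R) ⊆ {x | ∃ r : R, x = f * r * e} →
        (S : Set R) ⊆ (V : Set R) → (T : Set R) ⊆ (W : Set R) →
        (∀ v ∈ V, ∀ w ∈ W, ∀ v' ∈ V, v * w * v' ∈ V) →
        (∀ w ∈ W, ∀ v ∈ V, ∀ w' ∈ W, w * v * w' ∈ W) →
        (V : Set R) = {x | ∃ r : R, x = e * r * f} ∧
          (W : Set R) = {x | ∃ r : R, x = f * r * e} := by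
  classical
  obtain ⟨s, hs⟩ := hfg
  obtain ⟨La, hLa⟩ := exists_rep_one e hIe
  obtain ⟨Lc, hLc⟩ := exists_rep_one f hIf
  set G : Finset R := insert (1 : R) (s ∪ (La.map Prod.fst).toFinset ∪
      (La.map Prod.snd).toFinset ∪ (Lc.map Prod.fst).toFinset ∪ (Lc.map Prod.snd).toFinset)
    with hG
  have h1G : (1 : R) ∈ G := Finset.mem_insert_self _ _
  have hsG : ∀ x ∈ s, x ∈ G := fun x hx =>
    Finset.mem_insert_of_mem (Finset.mem_union_left _ (Finset.mem_union_left _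
      (Finset.mem_union_left _ (Finset.mem_union_left _ hx))))
  have haG : ∀ p ∈ La, p.1 ∈ G ∧ p.2 ∈ G := fun p hp =>
    ⟨Finset.mem_insert_of_mem (Finset.mem_union_left _ (Finset.mem_union_left _
        (Finset.mem_union_left _ (Finset.mem_union_right _
          (List.mem_toFinset.mpr (List.mem_map_of_mem (f := Prod.fst) hp)))))),
     Finset.mem_insert_of_mem (Finset.mem_union_left _ (Finset.mem_union_left _
        (Finset.mem_union_right _
          (List.mem_toFinset.mpr (List.mem_map_of_mem (f := Prod.snd) hp)))))⟩
  have hcG : ∀ p ∈ Lc, p.1 ∈ G ∧ p.2 ∈ G := fun p hp =>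
    ⟨Finset.mem_insert_of_mem (Finset.mem_union_left _ (Finset.mem_union_right _
        (List.mem_toFinset.mpr (List.mem_map_of_mem (f := Prod.fst) hp)))),
     Finset.mem_insert_of_mem (Finset.mem_union_right _
        (List.mem_toFinset.mpr (List.mem_map_of_mem (f := Prod.snd) hp)))⟩
  refine ⟨(G ×ˢ G ×ˢ G).image (fun p => e * (p.1 * p.2.1 * p.2.2) * f),
          (G ×ˢ G ×ˢ G).image (fun p => f * (p.1 * p.2.1 * p.2.2) * e), ?_, ?_, ?_⟩
  · intro x hx
    simp only [Finset.coe_image, Set.mem_image] at hx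
    obtain ⟨p, -, rfl⟩ := hx
    exact ⟨_, rfl⟩
  · intro x hx
    simp only [Finset.coe_image, Set.mem_image] at hx
    obtain ⟨p, -, rfl⟩ := hx
    exact ⟨_, rfl⟩
  · intro V W hVsub hWsub hSV hTW hVWV hWVW
    have hS : ∀ x ∈ (G : Set R), ∀ y ∈ (G : Set R), ∀ z ∈ (G : Set R),
        e * (x * y * z) * f ∈ V := by
      intro x hx y hy z hz
      apply hSV
      simp only [Finset.coe_image, Set.mem_image]
      refine ⟨(x, (y, z)), ?_, rfl⟩
      exact Finset.mem_coe.mpr (Finset.mem_product.mpr ⟨Finset.mem_coe.mp hx,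
        Finset.mem_product.mpr ⟨Finset.mem_coe.mp hy, Finset.mem_coe.mp hz⟩⟩)
    have hT : ∀ x ∈ (G : Set R), ∀ y ∈ (G : Set R), ∀ z ∈ (G : Set R),
        f * (x * y * z) * e ∈ W := by
      intro x hx y hy z hz
      apply hTW
      simp only [Finset.coe_image, Set.mem_image]
      refine ⟨(x, (y, z)), ?_, rfl⟩
      exact Finset.mem_coe.mpr (Finset.mem_product.mpr ⟨Finset.mem_coe.mp hx,
        Finset.mem_product.mpr ⟨Finset.mem_coe.mp hy, Finset.mem_coe.mp hz⟩⟩)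
    have claimV := word_mem_aux e f he hf La Lc hLa hLc (G : Set R) h1G
      (fun p hp => ⟨(haG p hp).1, (haG p hp).2⟩)
      (fun p hp => ⟨(hcG p hp).1, (hcG p hp).2⟩) V W hS hT hVWV
    have claimW := word_mem_aux f e hf he Lc La hLc hLa (G : Set R) h1G
      (fun p hp => ⟨(hcG p hp).1, (hcG p hp).2⟩)
      (fun p hp => ⟨(haG p hp).1, (haG p hp).2⟩) W V hT hS hWVW
    have hGadj : ∀ r : R, r ∈ Submodule.span F ((Submonoid.closure (G : Set R) : Set R)) := by
      intro r
      have h1 : r ∈ Algebra.adjoin F ((G : Set R)) := by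
        have : Algebra.adjoin F ((s : Set R)) ≤ Algebra.adjoin F ((G : Set R)) :=
          Algebra.adjoin_mono (fun x hx => hsG x hx)
        exact this (by rw [hs]; trivial)
      rwa [← Algebra.adjoin_eq_span]
    have hVall : ∀ r : R, e * r * f ∈ V := by
      intro r
      have hr := hGadj r
      induction hr using Submodule.span_induction with
      | mem x hx =>
          obtain ⟨L, hLG, rfl⟩ := Submonoid.exists_list_of_mem_closure hx
          exact claimV L hLG
      | zero => simpa using V.zero_mem
      | add x y _ _ hx hy =>
          have : e * (x + y) * f = e * x * f + e * y * f := by noncomm_ring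
          rw [this]; exact V.add_mem hx hy
      | smul c x _ hx =>
          have : e * (c • x) * f = c • (e * x * f) := by
            rw [mul_smul_comm, smul_mul_assoc]
          rw [this]; exact V.smul_mem c hx
    have hWall : ∀ r : R, f * r * e ∈ W := by
      intro r
      have hr := hGadj r
      induction hr using Submodule.span_induction with
      | mem x hx =>
          obtain ⟨L, hLG, rfl⟩ := Submonoid.exists_list_of_mem_closure hx
          exact claimW L hLG
      | zero => simpa using W.zero_mem
      | add x y _ _ hx hy =>
          have : f * (x + y) * e = f * x * e + f * y * e := by noncomm_ring
          rw [this]; exact W.add_mem hx hy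
      | smul c x _ hx =>
          have : f * (c • x) * e = c • (f * x * e) := by
            rw [mul_smul_comm, smul_mul_assoc]
          rw [this]; exact W.smul_mem c hx
    constructor
    · refine Set.Subset.antisymm hVsub ?_
      rintro x ⟨r, rfl⟩
      exact hVall r
    · refine Set.Subset.antisymm hWsub ?_
      rintro x ⟨r, rfl⟩
      exact hWall r
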